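/- Let S⁺ and S⁻ denote cyclic surface quotient singularities of types (1/d)(1,q) and (1/d)(1,-q) respectively and let R_{S^±}: ℤ/d → ℚ be the Riemann–Roch local correction terms, characterized by R_{S^+}(n) + R_{S^-}(n) = -{n/d}, R_{S^+}(n) + R_{S^-}(n-q) = -{n-q/d} - {n/d} + (d-1)/(2d), and R_{S^+}(n) + R_{S^-}(n+q) = -(d-1)/(2d). Then for all integers n and all m ≥ -1: R_{S^+}(n) + R_{S^-}(n - mq) = -Σ_{j=0}^{m} {(n + (j-m)q)/d} + m·(d-1)/(2d), with the convention that an empty sum is 0. -/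
import Mathlib


/-- Let `S⁺`, `S⁻` be cyclic quotient surface singularities of types `(1/d)(1,q)` and
`(1/d)(1,-q)` and `R_{S⁺}, R_{S⁻} : ℤ/d → ℚ` the Riemann–Roch local correction terms,
characterized by the three base identities (cases `m = 0, 1, -1`).  Then for all
integers `n` and all `m ≥ -1`:
`R_{S⁺}(n) + R_{S⁻}(n - m q) = -∑_{j=0}^m {(n + (j-m) q)/d} + m (d-1)/(2d)`,
with the convention that an empty sum is `0`. -/
theorem local_RR_correction (d : ℕ) (hd : 0 < d) (q : ℤ)
    (Rp Rm : ZMod d → ℚ)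
    (hbase0 : ∀ n : ℤ, Rp (n : ZMod d) + Rm (n : ZMod d)
        = -Int.fract ((n : ℚ) / (d : ℚ)))
    (hbase1 : ∀ n : ℤ, Rp (n : ZMod d) + Rm ((n - q : ℤ) : ZMod d)
        = -Int.fract (((n - q : ℤ) : ℚ) / (d : ℚ)) - Int.fract ((n : ℚ) / (d : ℚ))
          + ((d : ℚ) - 1) / (2 * d))
    (hbaseneg : ∀ n : ℤ, Rp (n : ZMod d) + Rm ((n + q : ℤ) : ZMod d)
        = -(((d : ℚ) - 1) / (2 * d))) :
    ∀ (n m : ℤ), -1 ≤ m →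
      Rp (n : ZMod d) + Rm ((n - m * q : ℤ) : ZMod d)
        = -(∑ j ∈ Finset.range (m + 1).toNat,
              Int.fract (((n : ℚ) + ((j : ℚ) - (m : ℚ)) * (q : ℚ)) / (d : ℚ)))
          + (m : ℚ) * ((d : ℚ) - 1) / (2 * d) := by
  have hstep : ∀ a : ℤ, Rm ((a - q : ℤ) : ZMod d)
      = Rm ((a : ℤ) : ZMod d) - Int.fract (((a - q : ℤ) : ℚ) / (d : ℚ))
        + ((d : ℚ) - 1) / (2 * d) := by
    intro a
    have h0 := hbase0 a
    have h1 := hbase1 a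
    linarith
  intro n
  refine Int.le_induction ?_ ?_
  · -- m = -1
    have h := hbaseneg n
    have hn : (n - (-1) * q : ℤ) = n + q := by ring
    rw [hn]
    simp only [show ((-1 : ℤ) + 1).toNat = 0 from rfl, Finset.range_zero,
      Finset.sum_empty]
    rw [h]
    push_cast
    ring
  · intro k hk IH
    have ha : (n - (k + 1) * q : ℤ) = (n - k * q) - q := by ring
    rw [ha, hstep (n - k * q)]
    have hk1 : (k + 1 + 1).toNat = (k + 1).toNat + 1 := by omega
    rw [hk1, Finset.sum_range_succ']
    have hcast : ∀ i : ℕ, ((n : ℚ) + (((i + 1 : ℕ) : ℚ) - ((k : ℤ) + 1 : ℤ)) * (q : ℚ)) / (d : ℚ)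
        = ((n : ℚ) + ((i : ℚ) - (k : ℚ)) * (q : ℚ)) / (d : ℚ) := by
      intro i
      push_cast
      ring_nf
    have hsum : ∑ i ∈ Finset.range (k + 1).toNat,
        Int.fract (((n : ℚ) + (((i + 1 : ℕ) : ℚ) - ((k : ℤ) + 1 : ℤ)) * (q : ℚ)) / (d : ℚ))
        = ∑ i ∈ Finset.range (k + 1).toNat,
        Int.fract (((n : ℚ) + ((i : ℚ) - (k : ℚ)) * (q : ℚ)) / (d : ℚ)) := by
      refine Finset.sum_congr rfl fun i _ => ?_
      rw [hcast]
    push_cast at hsum ⊢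
    rw [hsum]
    have hfr : ((n : ℚ) - (k : ℚ) * (q : ℚ) - (q : ℚ)) / (d : ℚ)
        = ((n : ℚ) + ((0 : ℚ) - ((k : ℚ) + 1)) * (q : ℚ)) / (d : ℚ) := by
      ring_nf
    rw [hfr]
    push_cast at IH
    linear_combination IH
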